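/- Equivalence classes of purely pseudofunctorial first-order deformations of a K-linear unitary pseudofunctor F are in bijection with the second cohomology group H²(F) of its purely pseudofunctorial deformation complex. -/

import Mathlib

open CategoryTheory CategoryTheory.Bicategory

universe w₁ w₂ v₁ v₂ u₁ u₂

variable {K : Type*} [CommRing K]
variable {B : Type u₁} [Bicategory.{w₁, v₁} B] [Bicategory.Strict B]
variable {C : Type u₂} [Bicategory.{w₂, v₂} C] [Bicategory.Strict C]
variable [∀ X Y : C, Preadditive (X ⟶ Y)]

/-- The composition part `F̂(g,f) : F(f) ≫ F(g) ⟶ F(f ≫ g)` of the pseudofunctorial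
structure of `F`. -/
abbrev pfStr (F : Pseudofunctor B C) {X Y Z : B} (f : X ⟶ Y) (g : Y ⟶ Z) :
    F.map f ≫ F.map g ⟶ F.map (f ≫ g) :=
  (F.mapComp f g).inv

/-- A purely pseudofunctorial first-order deformation of a unitary pseudofunctor `F`
over `K[ε]/(ε²)`: the equations are the coefficients of `ε` in the pseudofunctor axioms
for `F̂ + F̂⁽¹⁾ε`, `1 + F₀⁽¹⁾ε` (strict 2-categories). -/
structure PPFDeformation (F : Pseudofunctor B C)
    (hmap : ∀ X : B, F.map (𝟙 X) = 𝟙 (F.obj X)) where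
  F1 : ∀ {X Y Z : B} (f : X ⟶ Y) (g : Y ⟶ Z), F.map f ≫ F.map g ⟶ F.map (f ≫ g)
  F01 : ∀ X : B, F.map (𝟙 X) ⟶ 𝟙 (F.obj X)
  natural : ∀ {X Y Z : B} {f f' : X ⟶ Y} {g g' : Y ⟶ Z} (η : f ⟶ f') (θ : g ⟶ g'),
    (F.map₂ η ▷ F.map g ≫ F.map f' ◁ F.map₂ θ) ≫ F1 f' g' =
      F1 f g ≫ F.map₂ (η ▷ g ≫ f' ◁ θ)
  hexagon : ∀ {W X Y Z : B} (f : W ⟶ X) (g : X ⟶ Y) (h : Y ⟶ Z),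
    (F1 f g ▷ F.map h) ≫ pfStr F (f ≫ g) h + (pfStr F f g ▷ F.map h) ≫ F1 (f ≫ g) h =
      eqToHom (Bicategory.Strict.assoc (F.map f) (F.map g) (F.map h)) ≫
        ((F.map f ◁ F1 g h) ≫ pfStr F f (g ≫ h) +
          (F.map f ◁ pfStr F g h) ≫ F1 f (g ≫ h)) ≫
        eqToHom (congrArg F.map (Bicategory.Strict.assoc f g h).symm)
  triangle_left : ∀ {X Y : B} (f : X ⟶ Y),
    F1 (𝟙 X) f = (F01 X ▷ F.map f) ≫
      eqToHom (by rw [Bicategory.Strict.id_comp, Bicategory.Strict.id_comp])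
  triangle_right : ∀ {X Y : B} (f : X ⟶ Y),
    F1 f (𝟙 Y) = (F.map f ◁ F01 Y) ≫
      eqToHom (by rw [Bicategory.Strict.comp_id, Bicategory.Strict.comp_id])

variable (F : Pseudofunctor B C)

/-- Degree 1 cochains of the purely pseudofunctorial deformation complex `X•(F)`. -/
def OneFam := ∀ (X Y : B) (f : X ⟶ Y), F.map f ⟶ F.map f

/-- Degree 2 cochains of the purely pseudofunctorial deformation complex `X•(F)`. -/
def TwoFam := ∀ (X Y Z : B) (f : X ⟶ Y) (g : Y ⟶ Z), F.map f ≫ F.map g ⟶ F.map (f ≫ g)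

/-- Naturality of a degree 1 cochain. -/
def Natural1 (ξ : OneFam F) : Prop :=
  ∀ {X Y : B} {f f' : X ⟶ Y} (η : f ⟶ f'), F.map₂ η ≫ ξ X Y f' = ξ X Y f ≫ F.map₂ η

/-- Naturality of a degree 2 cochain. -/
def Natural2 (W : TwoFam F) : Prop :=
  ∀ {X Y Z : B} {f f' : X ⟶ Y} {g g' : Y ⟶ Z} (η : f ⟶ f') (θ : g ⟶ g'),
    (F.map₂ η ▷ F.map g ≫ F.map f' ◁ F.map₂ θ) ≫ W X Y Z f' g' =
      W X Y Z f g ≫ F.map₂ (η ▷ g ≫ f' ◁ θ)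

/-- The coboundary `δ : X¹(F) → X²(F)` (with the canonical paddings). -/
def d1 (ξ : OneFam F) : TwoFam F := fun X Y Z f g =>
  (ξ X Y f ▷ F.map g) ≫ pfStr F f g - pfStr F f g ≫ ξ X Z (f ≫ g) +
    (F.map f ◁ ξ Y Z g) ≫ pfStr F f g

/-- The coboundary `δ : X²(F) → X³(F)` (with the canonical paddings). -/
def d2 (W : TwoFam F) : ∀ (X Y Z T : B) (f : X ⟶ Y) (g : Y ⟶ Z) (h : Z ⟶ T),
    F.map f ≫ F.map g ≫ F.map h ⟶ F.map (f ≫ g ≫ h) := fun X Y Z T f g h =>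
  (eqToHom (Bicategory.Strict.assoc (F.map f) (F.map g) (F.map h)).symm ≫
      (W X Y Z f g ▷ F.map h) ≫ pfStr F (f ≫ g) h ≫
      eqToHom (congrArg F.map (Bicategory.Strict.assoc f g h)))
  - (F.map f ◁ pfStr F g h) ≫ W X Y T f (g ≫ h)
  + (eqToHom (Bicategory.Strict.assoc (F.map f) (F.map g) (F.map h)).symm ≫
      (pfStr F f g ▷ F.map h) ≫ W X Z T (f ≫ g) h ≫
      eqToHom (congrArg F.map (Bicategory.Strict.assoc f g h)))
  - (F.map f ◁ W Y Z T g h) ≫ pfStr F f (g ≫ h)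

/-- Degree 2 cocycles of `X•(F)`. -/
def Cocycle2 :=
  { W : TwoFam F // Natural2 F W ∧ ∀ (X Y Z T : B) (f : X ⟶ Y) (g : Y ⟶ Z) (h : Z ⟶ T),
      d2 F W X Y Z T f g h = 0 }

/-- Two degree 2 cocycles are cohomologous if they differ by the coboundary of a natural
degree 1 cochain. -/
def Cohomologous (z z' : Cocycle2 F) : Prop :=
  ∃ ξ : OneFam F, Natural1 F ξ ∧
    ∀ (X Y Z : B) (f : X ⟶ Y) (g : Y ⟶ Z),
      z'.1 X Y Z f g - z.1 X Y Z f g = d1 F ξ X Y Z f g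

variable {F}

/-- Equivalence of purely pseudofunctorial first-order deformations: there is a
pseudonatural isomorphism between the deformed pseudofunctors whose 1-cells are
identities and whose 2-cells reduce to identities mod `ε`; in first order this amounts
to the three conditions below. -/
def EquivDef (hmap : ∀ X : B, F.map (𝟙 X) = 𝟙 (F.obj X))
    (D D' : PPFDeformation F hmap) : Prop :=
  ∃ ξ : OneFam F, Natural1 F ξ ∧
    (∀ (X Y Z : B) (f : X ⟶ Y) (g : Y ⟶ Z),
      D'.F1 f g - D.F1 f g = d1 F ξ X Y Z f g) ∧
    (∀ X : B, D'.F01 X - D.F01 X = ξ X X (𝟙 X) ≫ eqToHom (hmap X))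

section Aux
set_option linter.unusedSectionVars false

theorem aux_wr_id {a b : C} {f f' : a ⟶ b} (η : f ⟶ f') {u : b ⟶ b} (hu : u = 𝟙 b) :
    η ▷ u = eqToHom (by rw [hu, Bicategory.Strict.comp_id]) ≫ η ≫
      eqToHom (by rw [hu, Bicategory.Strict.comp_id]) := by
  subst hu
  rw [Bicategory.whiskerRight_id]
  simp [Bicategory.Strict.rightUnitor_eqToIso]

theorem aux_wl_id {a b : C} {f f' : a ⟶ b} (η : f ⟶ f') {u : a ⟶ a} (hu : u = 𝟙 a) :
    u ◁ η = eqToHom (by rw [hu, Bicategory.Strict.id_comp]) ≫ η ≫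
      eqToHom (by rw [hu, Bicategory.Strict.id_comp]) := by
  subst hu
  rw [Bicategory.id_whiskerLeft]
  simp [Bicategory.Strict.leftUnitor_eqToIso]

variable (F)

theorem aux_map₂_eqToHom {X Y : B} {f g : X ⟶ Y} (h : f = g) :
    F.map₂ (eqToHom h) = eqToHom (congrArg F.map h) := by
  subst h; simp

theorem aux_two_congr (W : TwoFam F) {X Y Z : B} {f f' : X ⟶ Y} {g g' : Y ⟶ Z}
    (hf : f = f') (hg : g = g') :
    W X Y Z f' g' = eqToHom (by rw [hf, hg]) ≫ W X Y Z f g ≫ eqToHom (by rw [hf, hg]) := by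
  subst hf; subst hg; simp

theorem aux_pfStr_congr {X Y Z : B} {f f' : X ⟶ Y} {g g' : Y ⟶ Z}
    (hf : f = f') (hg : g = g') :
    pfStr F f' g' = eqToHom (by rw [hf, hg]) ≫ pfStr F f g ≫ eqToHom (by rw [hf, hg]) := by
  subst hf; subst hg; simp

theorem aux_one_congr (ξ : OneFam F) {X Y : B} {f f' : X ⟶ Y} (h : f = f') :
    ξ X Y f' = eqToHom (by rw [h]) ≫ ξ X Y f ≫ eqToHom (by rw [h]) := by
  subst h; simp

theorem aux_mapComp_id_left (hmap : ∀ X : B, F.map (𝟙 X) = 𝟙 (F.obj X))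
    (hunitary : ∀ X : B, (F.mapId X).hom = eqToHom (hmap X)) {X Y : B} (f : X ⟶ Y) :
    (F.mapComp (𝟙 X) f).hom =
      eqToHom (by rw [Bicategory.Strict.id_comp, hmap, Bicategory.Strict.id_comp]) := by
  have h := F.map₂_left_unitor f
  rw [Bicategory.Strict.leftUnitor_eqToIso, Bicategory.Strict.leftUnitor_eqToIso] at h
  simp only [eqToIso.hom, aux_map₂_eqToHom, hunitary, Bicategory.eqToHom_whiskerRight,
    eqToHom_trans] at h
  rw [← cancel_mono (eqToHom (by rw [hmap, Bicategory.Strict.id_comp] :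
    F.map (𝟙 X) ≫ F.map f = F.map f))]
  rw [← h]
  simp

theorem aux_pfStr_id_left (hmap : ∀ X : B, F.map (𝟙 X) = 𝟙 (F.obj X))
    (hunitary : ∀ X : B, (F.mapId X).hom = eqToHom (hmap X)) {X Y : B} (f : X ⟶ Y) :
    pfStr F (𝟙 X) f =
      eqToHom (by rw [hmap, Bicategory.Strict.id_comp, Bicategory.Strict.id_comp]) := by
  have : F.mapComp (𝟙 X) f = eqToIso (by rw [Bicategory.Strict.id_comp, hmap,
      Bicategory.Strict.id_comp]) :=
    Iso.ext (aux_mapComp_id_left F hmap hunitary f)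
  rw [pfStr, this]
  simp

theorem aux_mapComp_id_right (hmap : ∀ X : B, F.map (𝟙 X) = 𝟙 (F.obj X))
    (hunitary : ∀ X : B, (F.mapId X).hom = eqToHom (hmap X)) {X Y : B} (f : X ⟶ Y) :
    (F.mapComp f (𝟙 Y)).hom =
      eqToHom (by rw [Bicategory.Strict.comp_id, hmap, Bicategory.Strict.comp_id]) := by
  have h := F.map₂_right_unitor f
  rw [Bicategory.Strict.rightUnitor_eqToIso, Bicategory.Strict.rightUnitor_eqToIso] at h
  simp only [eqToIso.hom, aux_map₂_eqToHom, hunitary, Bicategory.whiskerLeft_eqToHom,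
    eqToHom_trans] at h
  rw [← cancel_mono (eqToHom (by rw [hmap, Bicategory.Strict.comp_id] :
    F.map f ≫ F.map (𝟙 Y) = F.map f))]
  rw [← h]
  simp

theorem aux_pfStr_id_right (hmap : ∀ X : B, F.map (𝟙 X) = 𝟙 (F.obj X))
    (hunitary : ∀ X : B, (F.mapId X).hom = eqToHom (hmap X)) {X Y : B} (f : X ⟶ Y) :
    pfStr F f (𝟙 Y) =
      eqToHom (by rw [hmap, Bicategory.Strict.comp_id, Bicategory.Strict.comp_id]) := by
  have : F.mapComp f (𝟙 Y) = eqToIso (by rw [Bicategory.Strict.comp_id, hmap,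
      Bicategory.Strict.comp_id]) :=
    Iso.ext (aux_mapComp_id_right F hmap hunitary f)
  rw [pfStr, this]
  simp
theorem aux_d2_zero_iff (W : TwoFam F) {X Y Z T : B} (f : X ⟶ Y) (g : Y ⟶ Z) (h : Z ⟶ T) :
    d2 F W X Y Z T f g h = 0 ↔
      (W X Y Z f g ▷ F.map h) ≫ pfStr F (f ≫ g) h +
          (pfStr F f g ▷ F.map h) ≫ W X Z T (f ≫ g) h =
        eqToHom (Bicategory.Strict.assoc (F.map f) (F.map g) (F.map h)) ≫
          ((F.map f ◁ W Y Z T g h) ≫ pfStr F f (g ≫ h) +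
            (F.map f ◁ pfStr F g h) ≫ W X Y T f (g ≫ h)) ≫
          eqToHom (congrArg F.map (Bicategory.Strict.assoc f g h).symm) := by
  have e1 := (Bicategory.Strict.assoc (F.map f) (F.map g) (F.map h)).symm
  have key : d2 F W X Y Z T f g h =
      eqToHom (Bicategory.Strict.assoc (F.map f) (F.map g) (F.map h)).symm ≫
        ((W X Y Z f g ▷ F.map h) ≫ pfStr F (f ≫ g) h +
          (pfStr F f g ▷ F.map h) ≫ W X Z T (f ≫ g) h) ≫
        eqToHom (congrArg F.map (Bicategory.Strict.assoc f g h)) -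
      ((F.map f ◁ W Y Z T g h) ≫ pfStr F f (g ≫ h) +
        (F.map f ◁ pfStr F g h) ≫ W X Y T f (g ≫ h)) := by
    rw [d2]
    simp only [Preadditive.comp_add, Preadditive.add_comp, Category.assoc]
    abel
  rw [key, sub_eq_zero]
  constructor
  · intro hh
    rw [← cancel_epi (eqToHom (Bicategory.Strict.assoc (F.map f) (F.map g) (F.map h)).symm),
      ← cancel_mono (eqToHom (congrArg F.map (Bicategory.Strict.assoc f g h)))]
    rw [Category.assoc, hh]
    simp
  · intro hh
    rw [hh]
    simp
theorem aux_cocycle_id_left (hmap : ∀ X : B, F.map (𝟙 X) = 𝟙 (F.obj X))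
    (hunitary : ∀ X : B, (F.mapId X).hom = eqToHom (hmap X)) (W : TwoFam F)
    (hW : ∀ (X Y Z T : B) (f : X ⟶ Y) (g : Y ⟶ Z) (h : Z ⟶ T), d2 F W X Y Z T f g h = 0)
    {X Y : B} (f : X ⟶ Y) :
    eqToHom (Bicategory.Strict.assoc (F.map (𝟙 X)) (F.map (𝟙 X)) (F.map f)).symm ≫
      (W X X X (𝟙 X) (𝟙 X) ▷ F.map f) ≫
      eqToHom (by simp [hmap] : F.map (𝟙 X ≫ 𝟙 X) ≫ F.map f = F.map (𝟙 X ≫ 𝟙 X ≫ f)) =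
    eqToHom (by rw [hmap]; simp :
        F.map (𝟙 X) ≫ F.map (𝟙 X) ≫ F.map f = F.map (𝟙 X) ≫ F.map f) ≫
      W X X Y (𝟙 X) f ≫ eqToHom (by simp : F.map (𝟙 X ≫ f) = F.map (𝟙 X ≫ 𝟙 X ≫ f)) := by
  have hz := hW X X X Y (𝟙 X) (𝟙 X) f
  rw [← sub_eq_zero, eq_comm, ← hz, d2]
  rw [aux_pfStr_congr F (Bicategory.Strict.id_comp (𝟙 X)).symm rfl,
      aux_two_congr F W (rfl : 𝟙 X = 𝟙 X) (Bicategory.Strict.id_comp f).symm,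
      aux_two_congr F W (Bicategory.Strict.id_comp (𝟙 X)).symm (rfl : f = f),
      aux_wl_id (W X X Y (𝟙 X) f) (hmap X)]
  simp only [aux_pfStr_id_left F hmap hunitary, Bicategory.eqToHom_whiskerRight,
    Bicategory.whiskerLeft_eqToHom, eqToHom_trans, eqToHom_trans_assoc, eqToHom_refl,
    Category.assoc, Category.id_comp, Category.comp_id]
  abel

theorem aux_cocycle_id_right (hmap : ∀ X : B, F.map (𝟙 X) = 𝟙 (F.obj X))
    (hunitary : ∀ X : B, (F.mapId X).hom = eqToHom (hmap X)) (W : TwoFam F)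
    (hW : ∀ (X Y Z T : B) (f : X ⟶ Y) (g : Y ⟶ Z) (h : Z ⟶ T), d2 F W X Y Z T f g h = 0)
    {X Y : B} (f : X ⟶ Y) :
    eqToHom (by rw [hmap]; simp :
        F.map f ≫ F.map (𝟙 Y) ≫ F.map (𝟙 Y) = F.map f ≫ F.map (𝟙 Y)) ≫
      W X Y Y f (𝟙 Y) ≫ eqToHom (by simp : F.map (f ≫ 𝟙 Y) = F.map (f ≫ 𝟙 Y ≫ 𝟙 Y)) =
    (F.map f ◁ W Y Y Y (𝟙 Y) (𝟙 Y)) ≫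
      eqToHom (by simp [hmap] :
        F.map f ≫ F.map (𝟙 Y ≫ 𝟙 Y) = F.map (f ≫ 𝟙 Y ≫ 𝟙 Y)) := by
  have hz := hW X Y Y Y f (𝟙 Y) (𝟙 Y)
  rw [← sub_eq_zero, eq_comm, ← hz, d2]
  rw [aux_pfStr_congr F (Bicategory.Strict.comp_id f).symm (rfl : 𝟙 Y = 𝟙 Y),
      aux_pfStr_congr F (rfl : f = f) (Bicategory.Strict.id_comp (𝟙 Y)).symm,
      aux_two_congr F W (rfl : f = f) (Bicategory.Strict.id_comp (𝟙 Y)).symm,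
      aux_two_congr F W (Bicategory.Strict.comp_id f).symm (rfl : 𝟙 Y = 𝟙 Y),
      aux_wr_id (W X Y Y f (𝟙 Y)) (hmap Y)]
  simp only [aux_pfStr_id_right F hmap hunitary, Bicategory.eqToHom_whiskerRight,
    Bicategory.whiskerLeft_eqToHom, eqToHom_trans, eqToHom_trans_assoc, eqToHom_refl,
    Category.assoc, Category.id_comp, Category.comp_id]
  abel
theorem aux_F01_eq (hmap : ∀ X : B, F.map (𝟙 X) = 𝟙 (F.obj X))
    (D : PPFDeformation F hmap) (X : B) :
    D.F01 X =
      eqToHom (show F.map (𝟙 X) = F.map (𝟙 X) ≫ F.map (𝟙 X) by rw [hmap]; simp) ≫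
        D.F1 (𝟙 X) (𝟙 X) ≫
        eqToHom (show F.map (𝟙 X ≫ 𝟙 X) = 𝟙 (F.obj X) by simp [hmap]) := by
  rw [D.triangle_left (𝟙 X), aux_wr_id (D.F01 X) (hmap X)]
  simp

theorem aux_d1_id (hmap : ∀ X : B, F.map (𝟙 X) = 𝟙 (F.obj X))
    (hunitary : ∀ X : B, (F.mapId X).hom = eqToHom (hmap X)) (ξ : OneFam F) (X : B) :
    eqToHom (show F.map (𝟙 X) = F.map (𝟙 X) ≫ F.map (𝟙 X) by rw [hmap]; simp) ≫
        d1 F ξ X X X (𝟙 X) (𝟙 X) ≫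
        eqToHom (show F.map (𝟙 X ≫ 𝟙 X) = 𝟙 (F.obj X) by simp [hmap]) =
      ξ X X (𝟙 X) ≫ eqToHom (hmap X) := by
  rw [d1, aux_pfStr_id_left F hmap hunitary,
    aux_one_congr F ξ (Bicategory.Strict.id_comp (𝟙 X)).symm,
    aux_wr_id (ξ X X (𝟙 X)) (hmap X), aux_wl_id (ξ X X (𝟙 X)) (hmap X)]
  simp only [Preadditive.comp_sub, Preadditive.sub_comp, Preadditive.comp_add,
    Preadditive.add_comp, Category.assoc, eqToHom_trans, eqToHom_trans_assoc, eqToHom_refl,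
    Category.id_comp, Category.comp_id]
  abel

def cocycleOfDef (hmap : ∀ X : B, F.map (𝟙 X) = 𝟙 (F.obj X))
    (D : PPFDeformation F hmap) : Cocycle2 F :=
  ⟨fun _ _ _ f g => D.F1 f g, fun η θ => D.natural η θ,
    fun _ _ _ _ f g h => (aux_d2_zero_iff F _ f g h).mpr (D.hexagon f g h)⟩

def defOfCocycle (hmap : ∀ X : B, F.map (𝟙 X) = 𝟙 (F.obj X))
    (hunitary : ∀ X : B, (F.mapId X).hom = eqToHom (hmap X)) (z : Cocycle2 F) :
    PPFDeformation F hmap where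
  F1 f g := z.1 _ _ _ f g
  F01 X := eqToHom (show F.map (𝟙 X) = F.map (𝟙 X) ≫ F.map (𝟙 X) by rw [hmap]; simp) ≫
    z.1 X X X (𝟙 X) (𝟙 X) ≫
    eqToHom (show F.map (𝟙 X ≫ 𝟙 X) = 𝟙 (F.obj X) by simp [hmap])
  natural η θ := z.2.1 η θ
  hexagon f g h := (aux_d2_zero_iff F z.1 f g h).mp (z.2.2 _ _ _ _ f g h)
  triangle_left {X Y} f := by
    rw [← cancel_mono (eqToHom (show F.map (𝟙 X ≫ f) = F.map (𝟙 X ≫ 𝟙 X ≫ f) by simp)),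
      ← cancel_epi (eqToHom (show F.map (𝟙 X) ≫ F.map (𝟙 X) ≫ F.map f = F.map (𝟙 X) ≫ F.map f
        by rw [hmap]; simp))]
    rw [← aux_cocycle_id_left F hmap hunitary z.1 z.2.2 f]
    simp [Bicategory.comp_whiskerRight]
  triangle_right {X Y} f := by
    rw [← cancel_mono (eqToHom (show F.map (f ≫ 𝟙 Y) = F.map (f ≫ 𝟙 Y ≫ 𝟙 Y) by simp)),
      ← cancel_epi (eqToHom (show F.map f ≫ F.map (𝟙 Y) ≫ F.map (𝟙 Y) = F.map f ≫ F.map (𝟙 Y)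
        by rw [hmap]; simp))]
    rw [aux_cocycle_id_right F hmap hunitary z.1 z.2.2 f]
    simp [Bicategory.whiskerLeft_comp]

theorem aux_ext (hmap : ∀ X : B, F.map (𝟙 X) = 𝟙 (F.obj X))
    {D D' : PPFDeformation F hmap}
    (h1 : (fun (X Y Z : B) (f : X ⟶ Y) (g : Y ⟶ Z) => D.F1 f g) =
      (fun X Y Z f g => D'.F1 f g))
    (h0 : D.F01 = D'.F01) : D = D' := by
  obtain ⟨G1, G01, _, _, _, _⟩ := D
  obtain ⟨G1', G01', _, _, _, _⟩ := D'
  simp only [PPFDeformation.mk.injEq]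
  refine ⟨?_, h0⟩
  funext X Y Z f g
  exact congrFun (congrFun (congrFun (congrFun (congrFun h1 X) Y) Z) f) g
end Aux
/-- Equivalence classes of purely pseudofunctorial first-order deformations of a
`K`-linear unitary pseudofunctor `F` are in bijection with the elements of `H²(F)`,
the second cohomology of its purely pseudofunctorial deformation complex; the bijection
sends the class of a deformation to the class of its 2-cocycle `F̂⁽¹⁾`. -/
theorem ppf_first_order_deformations_biject_H2
    (hmap : ∀ X : B, F.map (𝟙 X) = 𝟙 (F.obj X))
    (hunitary : ∀ X : B, (F.mapId X).hom = eqToHom (hmap X)) :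
    ∃ e : Quot (EquivDef hmap) ≃ Quot (Cohomologous F),
      ∀ (D : PPFDeformation F hmap) (z : Cocycle2 F),
        z.1 = (fun X Y Z f g => D.F1 f g) →
        e (Quot.mk _ D) = Quot.mk _ z := by
  refine ⟨⟨Quot.lift (fun D => Quot.mk _ (cocycleOfDef F hmap D)) ?_,
      Quot.lift (fun z => Quot.mk _ (defOfCocycle F hmap hunitary z)) ?_, ?_, ?_⟩, ?_⟩
  · rintro D D' ⟨ξ, hnat, hF1, -⟩
    exact Quot.sound ⟨ξ, hnat, fun X Y Z f g => hF1 X Y Z f g⟩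
  · rintro z z' ⟨ξ, hnat, hd⟩
    refine Quot.sound ⟨ξ, hnat, fun X Y Z f g => hd X Y Z f g, fun X => ?_⟩
    show (eqToHom (show F.map (𝟙 X) = F.map (𝟙 X) ≫ F.map (𝟙 X) by rw [hmap]; simp) ≫
        z'.1 X X X (𝟙 X) (𝟙 X) ≫
        eqToHom (show F.map (𝟙 X ≫ 𝟙 X) = 𝟙 (F.obj X) by simp [hmap])) -
      (eqToHom (show F.map (𝟙 X) = F.map (𝟙 X) ≫ F.map (𝟙 X) by rw [hmap]; simp) ≫
        z.1 X X X (𝟙 X) (𝟙 X) ≫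
        eqToHom (show F.map (𝟙 X ≫ 𝟙 X) = 𝟙 (F.obj X) by simp [hmap])) =
      ξ X X (𝟙 X) ≫ eqToHom (hmap X)
    rw [← aux_d1_id F hmap hunitary ξ X, ← hd X X X (𝟙 X) (𝟙 X)]
    simp [Preadditive.comp_sub, Preadditive.sub_comp]
  · intro q
    induction q using Quot.ind with | _ D => ?_
    show Quot.mk _ (defOfCocycle F hmap hunitary (cocycleOfDef F hmap D)) = Quot.mk _ D
    congr 1
    refine aux_ext F hmap rfl ?_
    funext X
    exact (aux_F01_eq F hmap D X).symm
  · intro q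
    induction q using Quot.ind with | _ z => ?_
    show Quot.mk _ (cocycleOfDef F hmap (defOfCocycle F hmap hunitary z)) = Quot.mk _ z
    congr 1
  · intro D z h
    show Quot.mk _ (cocycleOfDef F hmap D) = Quot.mk _ z
    congr 1
    exact Subtype.ext h.symm
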